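/- In U_E(λ) (char F ≠ 2, λ ∉ {0,1}), if z ∈ U_E(λ) satisfies xz = 0 for all x ∈ U_E(λ), then z = 0. -/

import Mathlib

/-- In `U_E(λ)`, if `x z = 0` for all `x`, then `z = 0`. -/
theorem stmt4 {F A I : Type*} [Field F] [NonUnitalNonAssocRing A] [Module F A]
    [SMulCommClass F A A] [IsScalarTower F A A]
    (hchar : (2 : F) ≠ 0) (lam : F) (hl0 : lam ≠ 0) (hl1 : lam ≠ 1)
    (e : I → A) (hindep : LinearIndependent F e)
    (hspan : Submodule.span F (Set.range e) = ⊤)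
    (hmul : ∀ i j, e i * e j = (1 - lam) • e i + lam • e j)
    (z : A) (hz : ∀ x : A, x * z = 0) :
    z = 0 := by
  have hsurj : Function.Surjective (Finsupp.linearCombination F e) := by
    rw [← LinearMap.range_eq_top, Finsupp.range_linearCombination, hspan]
  have hinj : Function.Injective (Finsupp.linearCombination F e) :=
    hindep
  obtain ⟨c, hc⟩ := hsurj z
  by_cases hI : Nonempty I
  · obtain ⟨i⟩ := hI
    set S : F := c.sum fun _ a => a with hS
    have hmulz : e i * z = ((1 - lam) * S) • e i + lam • z := by
      conv_lhs => rw [← hc, Finsupp.linearCombination_apply, Finsupp.mul_sum]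
      have h1 : (c.sum fun j a => e i * (a • e j))
          = c.sum fun j a => ((1 - lam) * a) • e i + lam • (a • e j) := by
        apply Finsupp.sum_congr
        intro j _
        rw [mul_smul_comm, hmul, smul_add, smul_smul, smul_smul, smul_smul,
          mul_comm lam, mul_comm _ (1 - lam)]
      rw [h1, Finsupp.sum_add, ← Finsupp.smul_sum, ← hc, Finsupp.linearCombination_apply]
      congr 1
      rw [hS, Finsupp.sum, Finsupp.sum, Finset.mul_sum, Finset.sum_smul]
    have h0 := hz (e i)
    rw [hmulz] at h0
    have hkey : lam • z = (-((1 - lam) * S)) • e i := by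
      rw [neg_smul]
      exact eq_neg_of_add_eq_zero_right h0
    have h2 : lam • c = Finsupp.single i (-((1 - lam) * S)) := by
      apply hinj
      rw [map_smul, hc, Finsupp.linearCombination_single]
      exact hkey
    have h3 : lam * S = -((1 - lam) * S) := by
      have h := congrArg (Finsupp.linearCombination F (fun _ : I => (1 : F))) h2
      rw [map_smul, Finsupp.linearCombination_single] at h
      simpa [Finsupp.linearCombination_apply, smul_eq_mul, mul_one, hS] using h
    have hS0 : S = 0 := by linear_combination h3
    have hc0 : c = 0 := by
      rw [hS0] at h2
      simp only [mul_zero, neg_zero, Finsupp.single_zero] at h2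
      exact (smul_eq_zero.mp h2).resolve_left hl0
    rw [← hc, hc0, map_zero]
  · rw [not_nonempty_iff] at hI
    have hc0 : c = 0 := by ext j; exact (hI.false j).elim
    rw [← hc, hc0, map_zero]
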